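/- If p is a prime with p ≡ 1 (mod 4n) for a positive integer n, then there exist rational numbers x, y with p = n·x² + y². -/

import Mathlib

/-- Auxiliary: under the congruence hypothesis, `-n` is a square mod `p`. -/
lemma aux_isSquare_neg (n : ℕ) (hn : 0 < n) (p : ℕ) (hp : p.Prime)
    (hcong : p % (4 * n) = 1) : IsSquare (-(n : ZMod p)) := by
  haveI : Fact p.Prime := ⟨hp⟩
  have hmod : ∀ d : ℕ, d ∣ 4 * n → p % d = 1 % d := by
    intro d hd
    rw [← Nat.mod_mod_of_dvd p hd, hcong]
  have h4 : p % 4 = 1 := by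
    have := hmod 4 ⟨n, rfl⟩
    simpa using this
  have hp2 : p ≠ 2 := by omega
  -- every prime divisor of n is a square mod p
  have hprime : ∀ q : ℕ, q.Prime → q ∣ n → IsSquare ((q : ℕ) : ZMod p) := by
    intro q hq hqn
    rcases eq_or_ne q 2 with rfl | hq2
    · have h8 : p % 8 = 1 := by
        have h8d : (8 : ℕ) ∣ 4 * n := by
          obtain ⟨m, rfl⟩ := hqn
          exact ⟨m, by ring⟩
        have := hmod 8 h8d
        simpa using this
      have := (ZMod.exists_sq_eq_two_iff hp2).mpr (Or.inl h8)
      simpa using this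
    · haveI : Fact q.Prime := ⟨hq⟩
      rw [ZMod.exists_sq_eq_prime_iff_of_mod_four_eq_one h4 hq2]
      have hq4 : q ∣ 4 * n := hqn.mul_left 4
      have hpq : p % q = 1 := by
        have := hmod q hq4
        rwa [Nat.mod_eq_of_lt hq.one_lt] at this
      have : ((p : ℕ) : ZMod q) = 1 := by
        rw [← ZMod.natCast_mod, hpq, Nat.cast_one]
      rw [this]
      exact IsSquare.one
  -- hence every divisor of n is a square mod p, by strong induction
  have key : ∀ k : ℕ, k ∣ n → IsSquare ((k : ℕ) : ZMod p) := by
    intro k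
    induction k using Nat.strong_induction_on with
    | _ k ih =>
      intro hk
      rcases eq_or_ne k 1 with rfl | hk1
      · simpa using isSquare_one
      have hk0 : k ≠ 0 := by
        rintro rfl
        exact hn.ne' (Nat.eq_zero_of_zero_dvd hk)
      obtain ⟨q, hq, m, rfl⟩ := Nat.exists_prime_and_dvd hk1
      have hm0 : m ≠ 0 := by
        rintro rfl; simp at hk0
      have hmlt : m < q * m := by
        have h1 := hq.two_le
        have h2 := Nat.pos_of_ne_zero hm0
        nlinarith
      have h1 : IsSquare ((q : ℕ) : ZMod p) :=
        hprime q hq (dvd_trans ⟨m, rfl⟩ hk)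
      have h2 : IsSquare ((m : ℕ) : ZMod p) :=
        ih m hmlt (dvd_trans ⟨q, mul_comm q m⟩ hk)
      have : ((q * m : ℕ) : ZMod p) = ((q : ℕ) : ZMod p) * ((m : ℕ) : ZMod p) := by
        push_cast; ring
      rw [this]
      exact h1.mul h2
  have hneg1 : IsSquare (-1 : ZMod p) := by
    rw [ZMod.exists_sq_eq_neg_one_iff]
    omega
  have hnn : IsSquare ((n : ℕ) : ZMod p) := key n dvd_rfl
  have : (-(n : ZMod p)) = (-1 : ZMod p) * ((n : ℕ) : ZMod p) := by ring
  rw [this]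
  exact hneg1.mul hnn

set_option maxHeartbeats 2000000 in
/-- Goldbach–Euler: if `p ≡ 1 (mod 4n)` is prime, then `p = n·x² + y²` with `x, y` rational. -/
theorem euler_goldbach_rational_representation (n : ℕ) (hn : 0 < n) (p : ℕ)
    (hp : p.Prime) (hcong : p % (4 * n) = 1) :
    ∃ x y : ℚ, (p : ℚ) = n * x ^ 2 + y ^ 2 := by
  haveI : Fact p.Prime := ⟨hp⟩
  haveI : NeZero n := ⟨hn.ne'⟩
  -- the case n = 1 : Fermat's two squares theorem
  rcases eq_or_ne n 1 with rfl | hn1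
  · have h4 : p % 4 ≠ 3 := by
      have : p % 4 = 1 := by simpa using hcong
      omega
    obtain ⟨a, b, hab⟩ := Nat.Prime.sq_add_sq h4
    exact ⟨(a : ℚ), (b : ℚ), by push_cast [← hab]; ring⟩
  have hn2 : 2 ≤ n := by omega
  -- p is big and coprime to n
  have hple : 4 * n + 1 ≤ p := by
    have h2 := hp.two_le
    have hq := Nat.div_add_mod p (4 * n)
    rw [hcong] at hq
    rcases Nat.eq_zero_or_pos (p / (4 * n)) with h | h
    · rw [h] at hq; omega
    · have : 4 * n * 1 ≤ 4 * n * (p / (4 * n)) := Nat.mul_le_mul_left _ h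
      omega
  have hpn : ¬ (p ∣ n) := fun h => by
    have := Nat.le_of_dvd hn h; omega
  have hcop : IsCoprime (p : ℤ) (n : ℤ) := by
    rw [Int.isCoprime_iff_gcd_eq_one, Int.gcd_natCast_natCast]
    exact (Nat.Prime.coprime_iff_not_dvd hp).mpr hpn
  -- a square root of -n mod p
  obtain ⟨r, hr⟩ := aux_isSquare_neg n hn p hp hcong
  set s : ℤ := (r.val : ℤ) with hs_def
  have hs : ((s : ℤ) : ZMod p) = r := by
    simp [hs_def, ZMod.natCast_val, ZMod.intCast_cast]
  have hs2 : ((s : ℤ) : ZMod p) ^ 2 = -((n : ℕ) : ZMod p) := by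
    rw [hs, sq, ← hr]
  -- pigeonhole setup
  set A : ℤ := (Nat.sqrt (p * n) : ℤ) with hA
  set B : ℤ := (Nat.sqrt p : ℤ) with hB
  set C : ℤ := (Nat.sqrt n : ℤ) with hC
  set S : Finset (ℤ × ℤ × ℤ) :=
    Finset.Icc 0 A ×ˢ Finset.Icc 0 B ×ˢ Finset.Icc 0 C with hS
  have hcardS : S.card = (Nat.sqrt (p * n) + 1) * ((Nat.sqrt p + 1) * (Nat.sqrt n + 1)) := by
    simp [hS, Int.card_Icc, hA, hB, hC]
  have hcard_lt : Fintype.card (ZMod p × ZMod n) < S.card := by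
    rw [hcardS, Fintype.card_prod, ZMod.card, ZMod.card]
    set a := Nat.sqrt (p * n)
    set b := Nat.sqrt p
    set c := Nat.sqrt n
    have h1 : p * n < (a + 1) ^ 2 := Nat.lt_succ_sqrt' (p * n)
    have h2 : p < (b + 1) ^ 2 := Nat.lt_succ_sqrt' p
    have h3 : n < (c + 1) ^ 2 := Nat.lt_succ_sqrt' n
    by_contra hcon
    push_neg at hcon
    have hsq : ((a + 1) * ((b + 1) * (c + 1))) ^ 2 ≤ (p * n) ^ 2 :=
      Nat.pow_le_pow_left hcon 2
    have hexp : ((a + 1) * ((b + 1) * (c + 1))) ^ 2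
        = (a + 1) ^ 2 * ((b + 1) ^ 2 * (c + 1) ^ 2) := by ring
    have h23 : p * n < (b + 1) ^ 2 * (c + 1) ^ 2 := by nlinarith
    have hgt : (p * n) ^ 2 < (a + 1) ^ 2 * ((b + 1) ^ 2 * (c + 1) ^ 2) := by nlinarith
    omega
  -- the pigeonhole map
  set g : ℤ × ℤ × ℤ → ZMod p × ZMod n :=
    fun v => (((v.1 : ℤ) : ZMod p) - ((s : ℤ) : ZMod p) * ((v.2.1 : ℤ) : ZMod p),
              ((v.1 : ℤ) : ZMod n) - ((v.2.2 : ℤ) : ZMod n)) with hg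
  obtain ⟨u, hu, v, hv, huv, hguv⟩ :=
    Finset.exists_ne_map_eq_of_card_lt_of_maps_to
      (t := (Finset.univ : Finset (ZMod p × ZMod n)))
      (by simpa using hcard_lt) (fun x _ => Finset.mem_univ (g x))
  -- the difference vector
  set a : ℤ := u.1 - v.1 with ha
  set b : ℤ := u.2.1 - v.2.1 with hb
  set c : ℤ := u.2.2 - v.2.2 with hc
  have hne : ¬ (a = 0 ∧ b = 0 ∧ c = 0) := by
    rintro ⟨h1, h2, h3⟩
    apply huv
    have e1 : u.1 = v.1 := by omega
    have e2 : u.2.1 = v.2.1 := by omega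
    have e3 : u.2.2 = v.2.2 := by omega
    exact Prod.ext e1 (Prod.ext e2 e3)
  -- bounds
  simp only [hS, Finset.mem_product, Finset.mem_Icc] at hu hv
  have hba : a ^ 2 ≤ (p : ℤ) * n := by
    have h1 : A ^ 2 ≤ (p : ℤ) * n := by
      rw [hA]
      exact_mod_cast (by exact_mod_cast Nat.sqrt_le' (p * n) : ((Nat.sqrt (p*n))^2 : ℤ) ≤ ((p*n : ℕ) : ℤ))
    have h2 : a ^ 2 ≤ A ^ 2 :=
      sq_le_sq' (by linarith only [ha, hu.1.1, hu.1.2, hv.1.1, hv.1.2])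
        (by linarith only [ha, hu.1.1, hu.1.2, hv.1.1, hv.1.2])
    linarith only [h1, h2]
  have hbb : b ^ 2 ≤ (p : ℤ) := by
    have h1 : B ^ 2 ≤ (p : ℤ) := by
      rw [hB]; exact_mod_cast Nat.sqrt_le' p
    have h2 : b ^ 2 ≤ B ^ 2 :=
      sq_le_sq' (by linarith only [hb, hu.2.1.1, hu.2.1.2, hv.2.1.1, hv.2.1.2])
        (by linarith only [hb, hu.2.1.1, hu.2.1.2, hv.2.1.1, hv.2.1.2])
    linarith only [h1, h2]
  have hbc : c ^ 2 ≤ (n : ℤ) := by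
    have h1 : C ^ 2 ≤ (n : ℤ) := by
      rw [hC]; exact_mod_cast Nat.sqrt_le' n
    have h2 : c ^ 2 ≤ C ^ 2 :=
      sq_le_sq' (by linarith only [hc, hu.2.2.1, hu.2.2.2, hv.2.2.1, hv.2.2.2])
        (by linarith only [hc, hu.2.2.1, hu.2.2.2, hv.2.2.1, hv.2.2.2])
    linarith only [h1, h2]
  -- congruences
  have hcg : g u = g v := hguv
  rw [hg] at hcg
  have hcp : ((a : ℤ) : ZMod p) = ((s : ℤ) : ZMod p) * ((b : ℤ) : ZMod p) := by
    have := congrArg Prod.fst hcg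
    simp only [ha, hb]
    push_cast
    linear_combination this
  have hcn : ((a : ℤ) : ZMod n) = ((c : ℤ) : ZMod n) := by
    have := congrArg Prod.snd hcg
    simp only [ha, hc]
    push_cast
    linear_combination this
  -- the quadratic form value
  set F : ℤ := a ^ 2 + n * b ^ 2 - p * c ^ 2 with hF
  have hdvd_p : (p : ℤ) ∣ F := by
    rw [← ZMod.intCast_zmod_eq_zero_iff_dvd]
    push_cast [hF]
    rw [hcp]
    have hpz : ((p : ℕ) : ZMod p) = 0 := ZMod.natCast_self p
    push_cast at hpz hs2 ⊢
    rw [hpz]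
    linear_combination ((b : ZMod p))^2 * hs2
  have hdvd_n : (n : ℤ) ∣ F := by
    rw [← ZMod.intCast_zmod_eq_zero_iff_dvd]
    push_cast [hF]
    rw [hcn]
    have hnz : ((n : ℕ) : ZMod n) = 0 := ZMod.natCast_self n
    have hpn1 : ((p : ℕ) : ZMod n) = 1 := by
      have : p % n = 1 := by
        have hd : n ∣ 4 * n := ⟨4, mul_comm 4 n⟩
        have := Nat.mod_mod_of_dvd p hd
        rw [hcong] at this
        rw [← this, Nat.mod_eq_of_lt hn2]
      rw [← ZMod.natCast_mod, this, Nat.cast_one]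
    push_cast at hnz hpn1 ⊢
    rw [hnz, hpn1]
    ring
  have hdvd : ((p : ℤ) * n) ∣ F := hcop.mul_dvd hdvd_p hdvd_n
  obtain ⟨k, hk⟩ := hdvd
  have hpn_pos : (0 : ℤ) < (p : ℤ) * n := by exact_mod_cast Nat.mul_pos hp.pos hn
  have hp0 : (0 : ℤ) ≤ (p : ℤ) := by positivity
  have hn0 : (0 : ℤ) ≤ (n : ℤ) := by positivity
  have hFlb : -((p : ℤ) * n) ≤ F := by
    have h1 : (p : ℤ) * c ^ 2 ≤ (p : ℤ) * n := mul_le_mul_of_nonneg_left hbc hp0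
    have h2 : (0 : ℤ) ≤ (n : ℤ) * b ^ 2 := mul_nonneg hn0 (sq_nonneg b)
    have h3 := sq_nonneg a
    rw [hF]; linarith only [h1, h2, h3]
  have hFub : F ≤ 2 * ((p : ℤ) * n) := by
    have h1 : (n : ℤ) * b ^ 2 ≤ (n : ℤ) * p := mul_le_mul_of_nonneg_left hbb hn0
    have h2 : (0 : ℤ) ≤ (p : ℤ) * c ^ 2 := mul_nonneg hp0 (sq_nonneg c)
    rw [hF]; linarith only [h1, h2, hba]
  have hklb : -1 ≤ k := by
    have : (p : ℤ) * n * (-1) ≤ (p : ℤ) * n * k := by rw [← hk]; linarith only [hFlb]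
    exact le_of_mul_le_mul_left this hpn_pos
  have hkub : k ≤ 2 := by
    have : (p : ℤ) * n * k ≤ (p : ℤ) * n * 2 := by rw [← hk]; linarith only [hFub]
    exact le_of_mul_le_mul_left this hpn_pos
  interval_cases k
  -- case k = -1 : impossible for n ≥ 2
  · exfalso
    have hF1 : a ^ 2 + (n : ℤ) * b ^ 2 - p * c ^ 2 = -((p : ℤ) * n) := by
      rw [← hF, hk]; ring
    have hpc : (p : ℤ) * c ^ 2 ≤ (p : ℤ) * n := mul_le_mul_of_nonneg_left hbc hp0
    have hnb : (0 : ℤ) ≤ (n : ℤ) * b ^ 2 := mul_nonneg hn0 (sq_nonneg b)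
    have hnne : (n : ℤ) ≠ 0 := by exact_mod_cast hn.ne'
    have hpne : (p : ℤ) ≠ 0 := by exact_mod_cast hp.pos.ne'
    have ha2 : a ^ 2 = 0 := le_antisymm (by linarith only [hF1, hpc, hnb]) (sq_nonneg a)
    have hb2 : (n : ℤ) * b ^ 2 = 0 := by linarith only [hF1, hpc, hnb, sq_nonneg a]
    have ha0 : a = 0 := sq_eq_zero_iff.mp ha2
    have hb0 : b = 0 := by
      rcases mul_eq_zero.mp hb2 with h | h
      · exact absurd h hnne
      · exact sq_eq_zero_iff.mp h
    have hc2 : c ^ 2 = (n : ℤ) := by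
      have hpc' : (p : ℤ) * c ^ 2 = (p : ℤ) * n := by linarith only [hF1, ha2, hb2]
      exact mul_left_cancel₀ hpne hpc'
    have hcne : c ≠ 0 := by
      intro h; exact hne ⟨ha0, hb0, h⟩
    -- n ∣ c from the congruence (a = 0)
    have hdc : (n : ℤ) ∣ c := by
      have : ((c : ℤ) : ZMod n) = 0 := by
        rw [← hcn, ha0]; simp
      exact (ZMod.intCast_zmod_eq_zero_iff_dvd c n).mp this
    obtain ⟨t, ht⟩ := hdc
    have hnz : (0 : ℤ) < n := by exact_mod_cast hn
    have hnne : (n : ℤ) ≠ 0 := by exact_mod_cast hn.ne'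
    have hsq : ((n : ℤ) * t) ^ 2 = (n : ℤ) := by rw [← ht]; exact hc2
    have hnt : (n : ℤ) * ((n : ℤ) * t ^ 2) = (n : ℤ) * 1 := by linear_combination hsq
    have h1 : (n : ℤ) * t ^ 2 = 1 := mul_left_cancel₀ hnne hnt
    have hn1 : (n : ℤ) = 1 := Int.eq_one_of_mul_eq_one_right (by positivity) h1
    have : n = 1 := by exact_mod_cast hn1
    omega
  -- case k = 0 : direct solution
  · have hF0 : a ^ 2 + (n : ℤ) * b ^ 2 = p * c ^ 2 := by
      have : F = 0 := by rw [hk]; ring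
      rw [hF] at this; linarith only [this]
    have hcne : c ≠ 0 := by
      intro h
      rw [h] at hF0
      have hnb : (0 : ℤ) ≤ (n : ℤ) * b ^ 2 := mul_nonneg hn0 (sq_nonneg b)
      have hnne : (n : ℤ) ≠ 0 := by exact_mod_cast hn.ne'
      have ha2 : a ^ 2 = 0 := le_antisymm (by linarith only [hF0, hnb]) (sq_nonneg a)
      have hb2 : (n : ℤ) * b ^ 2 = 0 := by linarith only [hF0, hnb, sq_nonneg a]
      have ha0 : a = 0 := sq_eq_zero_iff.mp ha2
      have hb0 : b = 0 := by
        rcases mul_eq_zero.mp hb2 with h' | h'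
        · exact absurd h' hnne
        · exact sq_eq_zero_iff.mp h'
      exact hne ⟨ha0, hb0, h⟩
    refine ⟨(b : ℚ) / (c : ℚ), (a : ℚ) / (c : ℚ), ?_⟩
    have hcq : (c : ℚ) ≠ 0 := Int.cast_ne_zero.mpr hcne
    have hQ : (a : ℚ) ^ 2 + (n : ℚ) * (b : ℚ) ^ 2 = (p : ℚ) * (c : ℚ) ^ 2 := by
      exact_mod_cast congrArg (Int.cast : ℤ → ℚ) hF0
    field_simp
    linarith only [hQ]
  -- case k = 1 : composition identity
  · have hF1 : a ^ 2 + (n : ℤ) * b ^ 2 = p * (c ^ 2 + n) := by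
      have : F = (p : ℤ) * n := by rw [hk]; ring
      rw [hF] at this; linarith only [this]
    have hid : (a * c + n * b) ^ 2 + (n : ℤ) * (b * c - a) ^ 2 = p * (c ^ 2 + n) ^ 2 := by
      linear_combination (c ^ 2 + (n : ℤ)) * hF1
    have hDpos : (0 : ℤ) < c ^ 2 + n := by positivity
    have hDQ : ((c : ℚ) ^ 2 + n) ≠ 0 := by
      have : ((c ^ 2 + (n : ℤ) : ℤ) : ℚ) ≠ 0 := Int.cast_ne_zero.mpr hDpos.ne'
      push_cast at this
      exact this
    refine ⟨((b : ℚ) * c - a) / ((c : ℚ) ^ 2 + n), ((a : ℚ) * c + n * b) / ((c : ℚ) ^ 2 + n), ?_⟩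
    have hQ : ((a : ℚ) * c + n * b) ^ 2 + (n : ℚ) * ((b : ℚ) * c - a) ^ 2
        = (p : ℚ) * ((c : ℚ) ^ 2 + n) ^ 2 := by
      exact_mod_cast congrArg (Int.cast : ℤ → ℚ) hid
    field_simp
    linarith only [hQ]
  -- case k = 2 : impossible
  · exfalso
    have hF2 : a ^ 2 + (n : ℤ) * b ^ 2 - p * c ^ 2 = 2 * ((p : ℤ) * n) := by
      rw [← hF, hk]; ring
    have hnb : (n : ℤ) * b ^ 2 ≤ (n : ℤ) * p := mul_le_mul_of_nonneg_left hbb hn0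
    have hpc2 : (0 : ℤ) ≤ (p : ℤ) * c ^ 2 := mul_nonneg hp0 (sq_nonneg c)
    have hnne : (n : ℤ) ≠ 0 := by exact_mod_cast hn.ne'
    have hbp' : (n : ℤ) * b ^ 2 = (n : ℤ) * p := le_antisymm hnb (by linarith only [hF2, hba, hpc2])
    have hbp : b ^ 2 = (p : ℤ) := mul_left_cancel₀ hnne hbp'
    -- p would be a perfect square
    have hnat : b.natAbs ^ 2 = p := by
      have hZ : ((b.natAbs : ℤ)) ^ 2 = (p : ℤ) := by
        rw [← Int.abs_eq_natAbs, sq_abs, hbp]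
      exact_mod_cast hZ
    have hdvd : b.natAbs ∣ p := ⟨b.natAbs, by rw [← hnat]; ring⟩
    rcases (hp.eq_one_or_self_of_dvd _ hdvd) with h1 | h1
    · rw [h1] at hnat; simp at hnat; omega
    · rw [h1] at hnat
      rw [pow_two] at hnat
      have h2 : 2 * p ≤ p * p := Nat.mul_le_mul_right p hp.two_le
      rw [hnat] at h2
      have := hp.two_le
      omega
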